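/- Let e ∈ Fin 7 → ℝ be a unit vector and let N := {g ∈ Spin(7) : g·ι(e)·g⁻¹ = ι(e) or g·ι(e)·g⁻¹ = -ι(e)} (a Spin(1,6)-subgroup of Spin(7)). Let r, r' : Γ →* Spin(7) be homomorphisms whose images are contained in N. Then the following are equivalent: (1) there exists u ∈ N with u·r(γ)·u⁻¹ = r'(γ) for all γ ∈ Γ; (2) there exists g ∈ Spin(7) with g·r(γ)·g⁻¹ = r'(γ) for all γ ∈ Γ, and moreover r(γ)·ι(e)·r(γ)⁻¹ = r'(γ)·ι(e)·r'(γ)⁻¹ for every γ ∈ Γ (i.e. the sign characters κ∘r and κ∘r' of Γ coincide, where κ(g) = ±1 is determined by g·ι(e)·g⁻¹ = κ(g) • ι(e) for g ∈ N). -/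

import Mathlib

/-- The standard positive-definite quadratic form `v ↦ ∑ i, (v i)^2` on `Fin 7 → ℝ`. -/
noncomputable def Q7 : QuadraticForm ℝ (Fin 7 → ℝ) :=
  QuadraticMap.weightedSumSquares ℝ (fun _ : Fin 7 => (1 : ℝ))

/-- `Spin(7)`, the spin group of the standard quadratic form on `Fin 7 → ℝ`. -/
abbrev Spin7 : Type :=
  ↥(spinGroup Q7)

/-- Membership in the `Spin(1,6)`-subgroup `N` attached to the unit vector `e`:
`g ∈ N` iff `g·ι(e)·g⁻¹ = ±ι(e)`. -/
def memN (e : Fin 7 → ℝ) (g : Spin7) : Prop :=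
  ((g : Spin7) : CliffordAlgebra Q7) * CliffordAlgebra.ι Q7 e *
      ((g⁻¹ : Spin7) : CliffordAlgebra Q7) = CliffordAlgebra.ι Q7 e ∨
  ((g : Spin7) : CliffordAlgebra Q7) * CliffordAlgebra.ι Q7 e *
      ((g⁻¹ : Spin7) : CliffordAlgebra Q7) = -(CliffordAlgebra.ι Q7 e)

namespace SpinAux

open CliffordAlgebra

lemma Q7_apply (v : Fin 7 → ℝ) : Q7 v = ∑ i, v i ^ 2 := by
  simp [Q7, QuadraticMap.weightedSumSquares_apply, sq]

lemma Q7_nonneg (v : Fin 7 → ℝ) : 0 ≤ Q7 v := by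
  rw [Q7_apply]; exact Finset.sum_nonneg fun i _ => sq_nonneg _

lemma Q7_eq_zero {v : Fin 7 → ℝ} (h : Q7 v = 0) : v = 0 := by
  rw [Q7_apply] at h
  have := (Finset.sum_eq_zero_iff_of_nonneg (fun i _ => sq_nonneg (v i))).mp h
  funext i
  exact pow_eq_zero_iff (n := 2) (by norm_num) |>.mp (this i (Finset.mem_univ i))

lemma inv_coe (g : Spin7) :
    ((g⁻¹ : Spin7) : CliffordAlgebra Q7) = star (g : CliffordAlgebra Q7) := rfl

lemma mul_coe (g h : Spin7) :
    ((g * h : Spin7) : CliffordAlgebra Q7) =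
      (g : CliffordAlgebra Q7) * (h : CliffordAlgebra Q7) := rfl

lemma star_self (g : Spin7) : star (g : CliffordAlgebra Q7) * g = 1 :=
  spinGroup.star_mul_self_of_mem g.2

lemma self_star (g : Spin7) : (g : CliffordAlgebra Q7) * star (g : CliffordAlgebra Q7) = 1 :=
  spinGroup.mul_star_self_of_mem g.2

lemma ιsq (a : Fin 7 → ℝ) (ha : Q7 a = 1) : ι Q7 a * ι Q7 a = 1 := by
  rw [ι_sq_scalar, ha, map_one]

lemma mul_ι_mem_spin (a b : Fin 7 → ℝ) (ha : Q7 a = 1) (hb : Q7 b = 1) :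
    ι Q7 a * ι Q7 b ∈ spinGroup Q7 := by
  have ha' := ιsq a ha
  have hb' := ιsq b hb
  refine spinGroup.mem_iff.mpr ⟨pinGroup.mem_iff.mpr ⟨?_, ?_⟩, ?_⟩
  · refine ⟨(⟨ι Q7 a, ι Q7 a, ha', ha'⟩ : (CliffordAlgebra Q7)ˣ) *
      (⟨ι Q7 b, ι Q7 b, hb', hb'⟩ : (CliffordAlgebra Q7)ˣ), ?_, rfl⟩
    exact Submonoid.mul_mem _
      (Subgroup.subset_closure ⟨a, rfl⟩) (Subgroup.subset_closure ⟨b, rfl⟩)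
  · constructor
    · show star (ι Q7 a * ι Q7 b) * _ = 1
      rw [star_mul, star_ι, star_ι, neg_mul_neg]
      calc ι Q7 b * ι Q7 a * (ι Q7 a * ι Q7 b)
          = ι Q7 b * (ι Q7 a * ι Q7 a) * ι Q7 b := by noncomm_ring
        _ = 1 := by rw [ha', mul_one, hb']
    · show _ * star (ι Q7 a * ι Q7 b) = 1
      rw [star_mul, star_ι, star_ι, neg_mul_neg]
      calc ι Q7 a * ι Q7 b * (ι Q7 b * ι Q7 a)
          = ι Q7 a * (ι Q7 b * ι Q7 b) * ι Q7 a := by noncomm_ring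
        _ = 1 := by rw [hb', mul_one, ha']
  · exact ι_mul_ι_mem_evenOdd_zero Q7 a b

lemma memN_sign {e : Fin 7 → ℝ} {g : Spin7} (h : memN e g) :
    ∃ t : ℝ, t * t = 1 ∧
      (g : CliffordAlgebra Q7) * ι Q7 e * star (g : CliffordAlgebra Q7) = t • ι Q7 e := by
  rcases h with h | h
  · exact ⟨1, by norm_num, by rw [← inv_coe]; simpa using h⟩
  · exact ⟨-1, by norm_num, by rw [← inv_coe]; simpa using h⟩

lemma star_conj {g : Spin7} {y : CliffordAlgebra Q7} {t : ℝ} (ht : t * t = 1)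
    (h : (g : CliffordAlgebra Q7) * y * star (g : CliffordAlgebra Q7) = t • y) :
    star (g : CliffordAlgebra Q7) * y * (g : CliffordAlgebra Q7) = t • y := by
  have hg1 := star_self g
  have h1 : y = t • (star (g : CliffordAlgebra Q7) * y * (g : CliffordAlgebra Q7)) := by
    calc y = (star (g : CliffordAlgebra Q7) * g) * y * (star (g : CliffordAlgebra Q7) * g) := by
          rw [hg1, one_mul, mul_one]
      _ = star (g : CliffordAlgebra Q7) * ((g : CliffordAlgebra Q7) * y *
            star (g : CliffordAlgebra Q7)) * g := by noncomm_ring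
      _ = star (g : CliffordAlgebra Q7) * (t • y) * g := by rw [h]
      _ = t • (star (g : CliffordAlgebra Q7) * y * (g : CliffordAlgebra Q7)) := by
          rw [mul_smul_comm, smul_mul_assoc]
  have h2 := congrArg (t • ·) h1
  simpa [smul_smul, ht] using h2.symm

lemma conj_mul {s a b : CliffordAlgebra Q7} (hs : star s * s = 1) :
    s * (a * b) * star s = (s * a * star s) * (s * b * star s) := by
  symm
  calc (s * a * star s) * (s * b * star s)
      = s * a * (star s * s) * b * star s := by noncomm_ring
    _ = s * (a * b) * star s := by rw [hs]; noncomm_ring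

end SpinAux


open CliffordAlgebra SpinAux

/-- For homomorphisms `r, r' : Γ →* Spin(7)` with image in the `Spin(1,6)`-subgroup `N`
attached to a unit vector `e`, conjugacy under `N` is equivalent to conjugacy under
`Spin(7)` together with equality of the sign characters `κ∘r` and `κ∘r'`. -/
theorem conjugate_in_N_iff
    {Γ : Type*} [Group Γ] (e : Fin 7 → ℝ) (he : ∑ i, (e i) ^ 2 = 1)
    (r r' : Γ →* Spin7) (hr : ∀ γ : Γ, memN e (r γ)) (hr' : ∀ γ : Γ, memN e (r' γ)) :
    (∃ u : Spin7, memN e u ∧ ∀ γ : Γ, u * r γ * u⁻¹ = r' γ) ↔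
      ((∃ g : Spin7, ∀ γ : Γ, g * r γ * g⁻¹ = r' γ) ∧
        ∀ γ : Γ,
          ((r γ : Spin7) : CliffordAlgebra Q7) * CliffordAlgebra.ι Q7 e *
              (((r γ)⁻¹ : Spin7) : CliffordAlgebra Q7) =
            ((r' γ : Spin7) : CliffordAlgebra Q7) * CliffordAlgebra.ι Q7 e *
              (((r' γ)⁻¹ : Spin7) : CliffordAlgebra Q7)) := by
  have hQe : Q7 e = 1 := by rw [Q7_apply]; exact he
  have hy : ι Q7 e * ι Q7 e = 1 := ιsq e hQe
  constructor
  · rintro ⟨u, hu, hconj⟩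
    refine ⟨⟨u, hconj⟩, ?_⟩
    intro γ
    obtain ⟨t, ht, hut⟩ := memN_sign hu
    obtain ⟨s, hs, hst⟩ := memN_sign (hr γ)
    rw [inv_coe, inv_coe, hst]
    have hcoe : ((r' γ : Spin7) : CliffordAlgebra Q7) =
        (u : CliffordAlgebra Q7) * (r γ : CliffordAlgebra Q7) * star (u : CliffordAlgebra Q7) := by
      rw [← hconj γ]; rfl
    have hstarcoe : star ((r' γ : Spin7) : CliffordAlgebra Q7) =
        (u : CliffordAlgebra Q7) * star (r γ : CliffordAlgebra Q7) *
          star (u : CliffordAlgebra Q7) := by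
      rw [hcoe, star_mul, star_mul, star_star, mul_assoc]
    have haux := star_conj ht hut
    symm
    calc ((r' γ : Spin7) : CliffordAlgebra Q7) * ι Q7 e * star ((r' γ : Spin7) : CliffordAlgebra Q7)
        = (u : CliffordAlgebra Q7) * (r γ : CliffordAlgebra Q7) *
            (star (u : CliffordAlgebra Q7) * ι Q7 e * (u : CliffordAlgebra Q7)) *
            star (r γ : CliffordAlgebra Q7) * star (u : CliffordAlgebra Q7) := by
          rw [hstarcoe, hcoe]; noncomm_ring
      _ = (u : CliffordAlgebra Q7) * (r γ : CliffordAlgebra Q7) * (t • ι Q7 e) *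
            star (r γ : CliffordAlgebra Q7) * star (u : CliffordAlgebra Q7) := by rw [haux]
      _ = t • ((u : CliffordAlgebra Q7) * ((r γ : CliffordAlgebra Q7) * ι Q7 e *
            star (r γ : CliffordAlgebra Q7)) * star (u : CliffordAlgebra Q7)) := by
          simp only [mul_smul_comm, smul_mul_assoc, mul_assoc]
      _ = t • ((u : CliffordAlgebra Q7) * (s • ι Q7 e) * star (u : CliffordAlgebra Q7)) := by
          rw [hst]
      _ = (t * s) • ((u : CliffordAlgebra Q7) * ι Q7 e * star (u : CliffordAlgebra Q7)) := by
          simp only [mul_smul_comm, smul_mul_assoc, smul_smul]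
      _ = (t * s) • (t • ι Q7 e) := by rw [hut]
      _ = s • ι Q7 e := by rw [smul_smul, show t * s * t = s by rw [show t * s * t = t * t * s from by ring, ht, one_mul]]
  · rintro ⟨⟨g, hg⟩, hκ⟩
    -- the conjugated vector
    obtain ⟨f, hf⟩ : ∃ f, ι Q7 f =
        (g : CliffordAlgebra Q7) * ι Q7 e * star (g : CliffordAlgebra Q7) := by
      have hlip : spinGroup.toUnits g ∈ lipschitzGroup Q7 :=
        spinGroup.units_mem_lipschitzGroup (x := spinGroup.toUnits g) g.2
      have hmem := lipschitzGroup.conjAct_smul_ι_mem_range_ι hlip e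
      rw [ConjAct.units_smul_def, ConjAct.ofConjAct_toConjAct] at hmem
      obtain ⟨f, hf⟩ := hmem
      exact ⟨f, hf⟩
    have hxx : ((g : CliffordAlgebra Q7) * ι Q7 e * star (g : CliffordAlgebra Q7)) *
        ((g : CliffordAlgebra Q7) * ι Q7 e * star (g : CliffordAlgebra Q7)) = 1 := by
      calc ((g : CliffordAlgebra Q7) * ι Q7 e * star (g : CliffordAlgebra Q7)) *
            ((g : CliffordAlgebra Q7) * ι Q7 e * star (g : CliffordAlgebra Q7))
          = (g : CliffordAlgebra Q7) * ι Q7 e * (star (g : CliffordAlgebra Q7) *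
              (g : CliffordAlgebra Q7)) * ι Q7 e * star (g : CliffordAlgebra Q7) := by
            noncomm_ring
        _ = (g : CliffordAlgebra Q7) * (ι Q7 e * ι Q7 e) * star (g : CliffordAlgebra Q7) := by
            rw [star_self, mul_one]; noncomm_ring
        _ = 1 := by rw [hy, mul_one, self_star]
    have hQf : Q7 f = 1 := by
      have h1 : algebraMap ℝ (CliffordAlgebra Q7) (Q7 f) = algebraMap ℝ (CliffordAlgebra Q7) 1 := by
        rw [map_one, ← ι_sq_scalar, hf, hxx]
      exact (algebraMap ℝ (CliffordAlgebra Q7)).injective h1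
    by_cases hc : Q7 (e + f) = 0
    · have hef : f = -e := by
        have h0 := Q7_eq_zero hc
        exact eq_neg_of_add_eq_zero_right h0
      refine ⟨g, Or.inr ?_, hg⟩
      rw [inv_coe, ← hf, hef, map_neg]
    · have hcpos : 0 < Q7 (e + f) := lt_of_le_of_ne (Q7_nonneg _) (Ne.symm hc)
      set c := Q7 (e + f) with hc_def
      have hsq : Real.sqrt c * Real.sqrt c = c := Real.mul_self_sqrt hcpos.le
      have hsne : Real.sqrt c ≠ 0 := by positivity
      have hscale : (Real.sqrt c)⁻¹ * (Real.sqrt c)⁻¹ * c = 1 := by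
        field_simp
        rw [sq, hsq]
      set m : Fin 7 → ℝ := (Real.sqrt c)⁻¹ • (e + f) with hm_def
      have hQm : Q7 m = 1 := by
        rw [hm_def, QuadraticMap.map_smul, smul_eq_mul, ← hc_def]
        exact hscale
      have hw_mem : ι Q7 e * ι Q7 m ∈ spinGroup Q7 := mul_ι_mem_spin e m hQe hQm
      have hff : ι Q7 f * ι Q7 f = 1 := ιsq f hQf
      have hιm : ι Q7 m = (Real.sqrt c)⁻¹ • (ι Q7 e + ι Q7 f) := by rw [hm_def, map_smul, map_add]
      have hpol : ι Q7 f * ι Q7 e + ι Q7 e * ι Q7 f = algebraMap ℝ _ (c - 2) := by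
        have h1 := ι_mul_ι_add_swap (Q := Q7) f e
        have h2 : QuadraticMap.polar Q7 f e = c - 2 := by
          rw [QuadraticMap.polar, add_comm f e, ← hc_def, hQf, hQe]
          ring
        rw [h1, h2]
      have hfe : ι Q7 f * ι Q7 e = algebraMap ℝ _ (c - 2) - ι Q7 e * ι Q7 f :=
        eq_sub_of_add_eq' (by rw [add_comm]; exact hpol)
      have hABA : ι Q7 e * ι Q7 f * ι Q7 e = (c - 2) • ι Q7 e - ι Q7 f := by
        rw [mul_assoc, hfe, mul_sub, ← Algebra.commutes, ← Algebra.smul_def,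
          ← mul_assoc, hy, one_mul]
      have key : (ι Q7 e + ι Q7 f) * ι Q7 f * (ι Q7 e + ι Q7 f) = c • ι Q7 e := by
        calc (ι Q7 e + ι Q7 f) * ι Q7 f * (ι Q7 e + ι Q7 f)
            = ι Q7 e * ι Q7 f * ι Q7 e + ι Q7 e * (ι Q7 f * ι Q7 f) +
              (ι Q7 f * ι Q7 f) * ι Q7 e + (ι Q7 f * ι Q7 f) * ι Q7 f := by noncomm_ring
          _ = ((c - 2) • ι Q7 e - ι Q7 f) + ι Q7 e + ι Q7 e + ι Q7 f := by
              rw [hABA, hff, mul_one, one_mul, one_mul]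
          _ = c • ι Q7 e := by
              rw [sub_smul]
              have h2 : (2 : ℝ) • ι Q7 e = ι Q7 e + ι Q7 e := two_smul ℝ _
              rw [h2]
              abel
      have hkey2 : (ι Q7 e * ι Q7 m) *
          ((g : CliffordAlgebra Q7) * ι Q7 e * star (g : CliffordAlgebra Q7)) *
          (ι Q7 m * ι Q7 e) = ι Q7 e := by
        rw [← hf, hιm]
        calc ι Q7 e * ((Real.sqrt c)⁻¹ • (ι Q7 e + ι Q7 f)) * ι Q7 f *
              (((Real.sqrt c)⁻¹ • (ι Q7 e + ι Q7 f)) * ι Q7 e)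
            = ((Real.sqrt c)⁻¹ * (Real.sqrt c)⁻¹) •
                (ι Q7 e * ((ι Q7 e + ι Q7 f) * ι Q7 f * (ι Q7 e + ι Q7 f)) * ι Q7 e) := by
              simp only [smul_mul_assoc, mul_smul_comm, smul_smul, mul_assoc]
          _ = ((Real.sqrt c)⁻¹ * (Real.sqrt c)⁻¹) • (ι Q7 e * (c • ι Q7 e) * ι Q7 e) := by
              rw [key]
          _ = ((Real.sqrt c)⁻¹ * (Real.sqrt c)⁻¹ * c) • (ι Q7 e * ι Q7 e * ι Q7 e) := by
              simp only [smul_mul_assoc, mul_smul_comm, smul_smul]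
          _ = ι Q7 e := by rw [hscale, one_smul, hy, one_mul]
      set w : Spin7 := ⟨ι Q7 e * ι Q7 m, hw_mem⟩ with hw_def
      have hwcoe : (w : CliffordAlgebra Q7) = ι Q7 e * ι Q7 m := rfl
      have hstarw : star (w : CliffordAlgebra Q7) = ι Q7 m * ι Q7 e := by
        rw [hwcoe, star_mul, star_ι, star_ι, neg_mul_neg]
      refine ⟨w * g, Or.inl ?_, ?_⟩
      · rw [inv_coe, mul_coe, star_mul]
        calc (w : CliffordAlgebra Q7) * (g : CliffordAlgebra Q7) * ι Q7 e *
              (star (g : CliffordAlgebra Q7) * star (w : CliffordAlgebra Q7))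
            = (w : CliffordAlgebra Q7) *
                ((g : CliffordAlgebra Q7) * ι Q7 e * star (g : CliffordAlgebra Q7)) *
                star (w : CliffordAlgebra Q7) := by noncomm_ring
          _ = ι Q7 e := by rw [hwcoe, hstarw]; exact hkey2
      · intro γ
        obtain ⟨t, ht, hsy⟩ := memN_sign (hr γ)
        have hs'y : ((r' γ : Spin7) : CliffordAlgebra Q7) * ι Q7 e *
            star ((r' γ : Spin7) : CliffordAlgebra Q7) = t • ι Q7 e := by
          rw [← inv_coe, ← hκ γ, inv_coe]
          exact hsy
        have hgcoe : ((r' γ : Spin7) : CliffordAlgebra Q7) =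
            (g : CliffordAlgebra Q7) * ((r γ : Spin7) : CliffordAlgebra Q7) *
              star (g : CliffordAlgebra Q7) := by
          rw [← hg γ]; rfl
        have hgstar : star ((r' γ : Spin7) : CliffordAlgebra Q7) =
            (g : CliffordAlgebra Q7) * star ((r γ : Spin7) : CliffordAlgebra Q7) *
              star (g : CliffordAlgebra Q7) := by
          rw [hgcoe, star_mul, star_mul, star_star, mul_assoc]
        have hs'f : ((r' γ : Spin7) : CliffordAlgebra Q7) * ι Q7 f *
            star ((r' γ : Spin7) : CliffordAlgebra Q7) = t • ι Q7 f := by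
          rw [hf]
          calc ((r' γ : Spin7) : CliffordAlgebra Q7) *
                ((g : CliffordAlgebra Q7) * ι Q7 e * star (g : CliffordAlgebra Q7)) *
                star ((r' γ : Spin7) : CliffordAlgebra Q7)
              = (g : CliffordAlgebra Q7) * ((r γ : Spin7) : CliffordAlgebra Q7) *
                  (star (g : CliffordAlgebra Q7) * (g : CliffordAlgebra Q7)) * ι Q7 e *
                  (star (g : CliffordAlgebra Q7) * (g : CliffordAlgebra Q7)) *
                  star ((r γ : Spin7) : CliffordAlgebra Q7) *
                  star (g : CliffordAlgebra Q7) := by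
                rw [hgstar, hgcoe]; noncomm_ring
            _ = (g : CliffordAlgebra Q7) *
                  (((r γ : Spin7) : CliffordAlgebra Q7) * ι Q7 e *
                    star ((r γ : Spin7) : CliffordAlgebra Q7)) *
                  star (g : CliffordAlgebra Q7) := by
                rw [star_self]; noncomm_ring
            _ = (g : CliffordAlgebra Q7) * (t • ι Q7 e) * star (g : CliffordAlgebra Q7) := by
                rw [hsy]
            _ = t • ((g : CliffordAlgebra Q7) * ι Q7 e * star (g : CliffordAlgebra Q7)) := by
                rw [mul_smul_comm, smul_mul_assoc]
        have hs'm : ((r' γ : Spin7) : CliffordAlgebra Q7) * ι Q7 m *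
            star ((r' γ : Spin7) : CliffordAlgebra Q7) = t • ι Q7 m := by
          rw [hιm, mul_smul_comm, smul_mul_assoc, mul_add, add_mul, hs'y]
          rw [hs'f, ← smul_add, smul_comm]
        have h1 : ((r' γ : Spin7) : CliffordAlgebra Q7) * (w : CliffordAlgebra Q7) *
            star ((r' γ : Spin7) : CliffordAlgebra Q7) = (w : CliffordAlgebra Q7) := by
          rw [hwcoe, conj_mul (star_self (r' γ)), hs'y, hs'm, smul_mul_assoc, mul_smul_comm,
            smul_smul, ht, one_smul]
        have hcomm : ((r' γ : Spin7) : CliffordAlgebra Q7) * (w : CliffordAlgebra Q7) =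
            (w : CliffordAlgebra Q7) * ((r' γ : Spin7) : CliffordAlgebra Q7) := by
          conv_lhs => rw [show ((r' γ : Spin7) : CliffordAlgebra Q7) * (w : CliffordAlgebra Q7) =
            ((r' γ : Spin7) : CliffordAlgebra Q7) * (w : CliffordAlgebra Q7) *
              (star ((r' γ : Spin7) : CliffordAlgebra Q7) *
                ((r' γ : Spin7) : CliffordAlgebra Q7)) from by rw [star_self, mul_one]]
          rw [show ((r' γ : Spin7) : CliffordAlgebra Q7) * (w : CliffordAlgebra Q7) *
              (star ((r' γ : Spin7) : CliffordAlgebra Q7) *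
                ((r' γ : Spin7) : CliffordAlgebra Q7)) =
              (((r' γ : Spin7) : CliffordAlgebra Q7) * (w : CliffordAlgebra Q7) *
                star ((r' γ : Spin7) : CliffordAlgebra Q7)) *
                ((r' γ : Spin7) : CliffordAlgebra Q7) from by noncomm_ring, h1]
        apply Subtype.ext
        rw [mul_coe, mul_coe, inv_coe, mul_coe, star_mul]
        calc (w : CliffordAlgebra Q7) * (g : CliffordAlgebra Q7) *
              ((r γ : Spin7) : CliffordAlgebra Q7) *
              (star (g : CliffordAlgebra Q7) * star (w : CliffordAlgebra Q7))
            = (w : CliffordAlgebra Q7) *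
                ((g : CliffordAlgebra Q7) * ((r γ : Spin7) : CliffordAlgebra Q7) *
                  star (g : CliffordAlgebra Q7)) * star (w : CliffordAlgebra Q7) := by
              noncomm_ring
          _ = (w : CliffordAlgebra Q7) * ((r' γ : Spin7) : CliffordAlgebra Q7) *
                star (w : CliffordAlgebra Q7) := by rw [← hgcoe]
          _ = ((r' γ : Spin7) : CliffordAlgebra Q7) * ((w : CliffordAlgebra Q7) *
                star (w : CliffordAlgebra Q7)) := by rw [← hcomm]; noncomm_ring
          _ = ((r' γ : Spin7) : CliffordAlgebra Q7) := by rw [self_star, mul_one]
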